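/- Conversion from η-ball robust error to expected ℓ_p robust error: let X be a measurable space, μ a probability measure on X, U : X → Set X a perturbation function with x ∈ U x for every x, and h, f : X → ℝ functions with values in [0,1]. Define G(x) := ⨆_{z ∈ U x} |h z − f x|. Let p ≥ 1 be real, η ∈ [0,1], ε ≥ 0, and assume that x ↦ G(x) and x ↦ ⨆_{z ∈ U x} |h z − f x|^p are measurable. If μ({x : G x > η}) ≤ ε, then ∫ (⨆_{z ∈ U x} |h z − f x|^p) dμ ≤ η^p + ε·(1 − η^p) ≤ η^p + ε. -/

import Mathlib

open MeasureTheory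

/-- Conversion from `η`-ball robust error to expected `ℓ_p` robust error:
for a perturbation function `U` with `x ∈ U x`, hypothesis `h` and target `f`
with values in `[0,1]`, if the robust absolute loss
`G x = sSup {|h z − f x| : z ∈ U x}` exceeds `η` with probability at most `ε`,
then the expected `ℓ_p` robust loss is at most `η^p + ε·(1 − η^p) ≤ η^p + ε`. -/
theorem lp_robust_error_of_eta_ball_error
    {X : Type*} [MeasurableSpace X] (μ : Measure X) [IsProbabilityMeasure μ]
    (U : X → Set X) (hU : ∀ x, x ∈ U x)
    (h f : X → ℝ)
    (hh : ∀ x, h x ∈ Set.Icc (0 : ℝ) 1) (hf : ∀ x, f x ∈ Set.Icc (0 : ℝ) 1)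
    (p : ℝ) (hp : 1 ≤ p) (η : ℝ) (hη : η ∈ Set.Icc (0 : ℝ) 1) (ε : ℝ) (hε : 0 ≤ ε)
    (hG : Measurable fun x => sSup ((fun z => |h z - f x|) '' U x))
    (hGp : Measurable fun x => sSup ((fun z => |h z - f x| ^ p) '' U x))
    (htail : μ {x | sSup ((fun z => |h z - f x|) '' U x) > η} ≤ ENNReal.ofReal ε) :
    (∫ x, sSup ((fun z => |h z - f x| ^ p) '' U x) ∂μ) ≤ η ^ p + ε * (1 - η ^ p) ∧
    η ^ p + ε * (1 - η ^ p) ≤ η ^ p + ε := by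
  obtain ⟨hη0, hη1⟩ := hη
  have hp0 : (0:ℝ) ≤ p := le_trans zero_le_one hp
  have hηp0 : (0:ℝ) ≤ η ^ p := Real.rpow_nonneg hη0 p
  have hηp1 : η ^ p ≤ 1 := Real.rpow_le_one hη0 hη1 hp0
  -- basic bounds on |h z - f x|
  have habs : ∀ x z, |h z - f x| ≤ 1 := by
    intro x z
    have h1 := hh z; have h2 := hf x
    rw [abs_le]
    constructor <;> [linarith [h1.1, h2.2]; linarith [h1.2, h2.1]]
  set G := fun x => sSup ((fun z => |h z - f x|) '' U x) with hGdef
  set Gp := fun x => sSup ((fun z => |h z - f x| ^ p) '' U x) with hGpdef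
  set B := {x | G x > η} with hBdef
  have hBmeas : MeasurableSet B := measurableSet_lt measurable_const hG
  -- pointwise bound: Gp x ≤ η^p + indicator B (1 - η^p)
  have hptwise : ∀ x, Gp x ≤ η ^ p + Set.indicator B (fun _ => 1 - η ^ p) x := by
    intro x
    have hne : ((fun z => |h z - f x| ^ p) '' U x).Nonempty :=
      ⟨_, Set.mem_image_of_mem _ (hU x)⟩
    by_cases hx : x ∈ B
    · rw [Set.indicator_of_mem hx]
      have : Gp x ≤ 1 := by
        apply csSup_le hne
        rintro _ ⟨z, _, rfl⟩
        exact Real.rpow_le_one (abs_nonneg _) (habs x z) hp0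
      linarith
    · rw [Set.indicator_of_notMem hx, add_zero]
      have hGle : G x ≤ η := not_lt.1 hx
      apply csSup_le hne
      rintro _ ⟨z, hz, rfl⟩
      have hle : |h z - f x| ≤ G x := by
        apply le_csSup ⟨1, ?_⟩ (Set.mem_image_of_mem _ hz)
        rintro _ ⟨w, _, rfl⟩; exact habs x w
      exact Real.rpow_le_rpow (abs_nonneg _) (le_trans hle hGle) hp0
  -- integrability
  have hGpint : Integrable Gp μ := by
    apply ((integrable_const (1:ℝ)).mono' hGp.aestronglyMeasurable)
    filter_upwards with x
    rw [Real.norm_eq_abs, abs_le]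
    refine ⟨?_, ?_⟩
    · have hbdd : BddAbove ((fun z => |h z - f x| ^ p) '' U x) := by
        refine ⟨1, ?_⟩
        rintro _ ⟨w, _, rfl⟩; exact Real.rpow_le_one (abs_nonneg _) (habs x w) hp0
      have h0 : (0:ℝ) ≤ |h x - f x| ^ p := Real.rpow_nonneg (abs_nonneg _) p
      have : (0:ℝ) ≤ Gp x :=
        h0.trans (le_csSup hbdd (Set.mem_image_of_mem _ (hU x)))
      linarith
    · apply csSup_le ⟨_, Set.mem_image_of_mem _ (hU x)⟩
      rintro _ ⟨z, _, rfl⟩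
      exact Real.rpow_le_one (abs_nonneg _) (habs x z) hp0
  have hRint : Integrable (fun x => η ^ p + Set.indicator B (fun _ => 1 - η ^ p) x) μ :=
    (integrable_const _).add ((integrable_const _).indicator hBmeas)
  have hint := integral_mono hGpint hRint hptwise
  rw [integral_add (integrable_const _) ((integrable_const _).indicator hBmeas),
    integral_const, integral_indicator hBmeas, integral_const] at hint
  have hμB : (μ B).toReal ≤ ε := ENNReal.toReal_le_of_le_ofReal hε htail
  have hμBnn : (0:ℝ) ≤ (μ B).toReal := ENNReal.toReal_nonneg
  constructor
  · refine hint.trans ?_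
    simp only [measure_univ, ENNReal.toReal_one, one_smul, smul_eq_mul, Measure.restrict_apply_univ, measureReal_restrict_apply_univ, measureReal_def]
    have : (μ B).toReal * (1 - η ^ p) ≤ ε * (1 - η ^ p) :=
      mul_le_mul_of_nonneg_right hμB (by linarith)
    linarith
  · nlinarith
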